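/- Let ε > 0, let μ ∈ P₂(ℝ^d), let ν be a σ-subgaussian probability measure on ℝ^d for some σ > 0, and let g : ℝ^d → ℝ be a measurable function satisfying g(y) ≤ ½∫‖z−y‖² dμ(z) for all y ∈ ℝ^d. Define w(x,y) := exp((−½‖x−y‖² + g(y))/ε). Then for every x ∈ ℝ^d the integral D(x) := ∫ w(x,y) dν(y) is finite and strictly positive, the vector-valued integral N(x) := ∫ y·w(x,y) dν(y) is well defined, and the function f(x) := −ε·log D(x) is differentiable at every x ∈ ℝ^d with gradient ∇f(x) = x − T(x), where T(x) := N(x)/D(x). -/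

import Mathlib

open MeasureTheory ENNReal
open scoped RealInnerProductSpace

/-- `μ ∈ P₂(ℝ^d)`: a Borel probability measure with finite second moment. -/
def MemP2 {d : ℕ} (μ : Measure (EuclideanSpace ℝ (Fin d))) : Prop :=
  IsProbabilityMeasure μ ∧ Integrable (fun x => ‖x‖ ^ 2) μ

/-- `μ` is a `σ`-subgaussian probability measure on `ℝ^d`. -/
def IsSubgaussian {d : ℕ} (σ : ℝ) (μ : Measure (EuclideanSpace ℝ (Fin d))) : Prop :=
  IsProbabilityMeasure μ ∧ ∀ v : EuclideanSpace ℝ (Fin d), ‖v‖ = 1 →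
    ∫⁻ x, ENNReal.ofReal (Real.exp (⟪x, v⟫ ^ 2 / σ ^ 2)) ∂μ ≤ 2


-- pointwise bound
lemma pw {d : ℕ} {σ : ℝ} (hσ : 0 < σ) (y : EuclideanSpace ℝ (Fin d)) :
    Real.exp (‖y‖ ^ 2 / (((d : ℝ) + 1) * σ ^ 2)) ≤
      1 + ∑ i : Fin d, Real.exp ((y i) ^ 2 / σ ^ 2) := by
  have hsum : ‖y‖ ^ 2 = ∑ i : Fin d, (y i) ^ 2 := by
    rw [EuclideanSpace.norm_eq]
    rw [Real.sq_sqrt (by positivity)]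
    simp [Real.norm_eq_abs, sq_abs]
  rcases Nat.eq_zero_or_pos d with hd | hd
  · subst hd
    simp only [Finset.univ_eq_empty, Finset.sum_empty] at hsum ⊢
    rw [hsum]
    simp
  · obtain ⟨i₀, -, hi₀⟩ := Finset.exists_max_image (Finset.univ : Finset (Fin d))
      (fun i => (y i) ^ 2) (Finset.univ_nonempty_iff.2 ⟨⟨0, hd⟩⟩)
    have h1 : ‖y‖ ^ 2 / (((d : ℝ) + 1) * σ ^ 2) ≤ (y i₀) ^ 2 / σ ^ 2 := by
      rw [div_le_div_iff₀ (by positivity) (by positivity)]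
      have : ∑ i : Fin d, (y i) ^ 2 ≤ (d : ℝ) * (y i₀) ^ 2 := by
        calc ∑ i : Fin d, (y i) ^ 2 ≤ ∑ _i : Fin d, (y i₀) ^ 2 :=
              Finset.sum_le_sum fun i _ => hi₀ i (Finset.mem_univ i)
          _ = (d : ℝ) * (y i₀) ^ 2 := by simp [mul_comm]
      rw [hsum]
      nlinarith [sq_nonneg (y i₀), sq_nonneg σ]
    have h2 : Real.exp (‖y‖ ^ 2 / (((d : ℝ) + 1) * σ ^ 2)) ≤ Real.exp ((y i₀) ^ 2 / σ ^ 2) :=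
      Real.exp_le_exp.2 h1
    have h3 : Real.exp ((y i₀) ^ 2 / σ ^ 2) ≤ ∑ i : Fin d, Real.exp ((y i) ^ 2 / σ ^ 2) :=
      Finset.single_le_sum (f := fun i => Real.exp ((y i) ^ 2 / σ ^ 2))
        (fun i _ => (Real.exp_pos _).le) (Finset.mem_univ i₀)
    linarith

lemma master {d : ℕ} {σ : ℝ} {ν : Measure (EuclideanSpace ℝ (Fin d))}
    (hσ : 0 < σ) (hν : IsSubgaussian σ ν) :
    Integrable (fun y => Real.exp (‖y‖ ^ 2 / (((d : ℝ) + 1) * σ ^ 2))) ν := by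
  haveI := hν.1
  have hcont : Continuous fun y : EuclideanSpace ℝ (Fin d) =>
      Real.exp (‖y‖ ^ 2 / (((d : ℝ) + 1) * σ ^ 2)) := by fun_prop
  refine ⟨hcont.aestronglyMeasurable, ?_⟩
  rw [hasFiniteIntegral_iff_ofReal (Filter.Eventually.of_forall fun y => (Real.exp_pos _).le)]
  have hmi : ∀ i : Fin d, Measurable fun y : EuclideanSpace ℝ (Fin d) =>
      ENNReal.ofReal (Real.exp ((y i) ^ 2 / σ ^ 2)) := by
    intro i
    have : Continuous fun y : EuclideanSpace ℝ (Fin d) => Real.exp ((y i) ^ 2 / σ ^ 2) := by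
      have := (EuclideanSpace.proj i : EuclideanSpace ℝ (Fin d) →L[ℝ] ℝ).continuous
      fun_prop
    exact this.measurable.ennreal_ofReal
  have step1 : ∫⁻ y, ENNReal.ofReal (Real.exp (‖y‖ ^ 2 / (((d : ℝ) + 1) * σ ^ 2))) ∂ν ≤
      ∫⁻ y, (1 + ∑ i : Fin d, ENNReal.ofReal (Real.exp ((y i) ^ 2 / σ ^ 2))) ∂ν := by
    apply lintegral_mono
    intro y
    have := pw hσ y
    calc ENNReal.ofReal (Real.exp (‖y‖ ^ 2 / (((d : ℝ) + 1) * σ ^ 2)))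
        ≤ ENNReal.ofReal (1 + ∑ i : Fin d, Real.exp ((y i) ^ 2 / σ ^ 2)) :=
          ENNReal.ofReal_le_ofReal this
      _ = 1 + ∑ i : Fin d, ENNReal.ofReal (Real.exp ((y i) ^ 2 / σ ^ 2)) := by
          rw [ENNReal.ofReal_add zero_le_one (Finset.sum_nonneg fun i _ => (Real.exp_pos _).le),
            ENNReal.ofReal_one, ENNReal.ofReal_sum_of_nonneg fun i _ => (Real.exp_pos _).le]
  have step2 : ∫⁻ y, (1 + ∑ i : Fin d, ENNReal.ofReal (Real.exp ((y i) ^ 2 / σ ^ 2))) ∂ν ≤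
      1 + (d : ℝ≥0∞) * 2 := by
    rw [lintegral_add_left measurable_const, lintegral_const, measure_univ, mul_one,
      lintegral_finset_sum _ fun i _ => hmi i]
    gcongr
    calc ∑ i : Fin d, ∫⁻ y, ENNReal.ofReal (Real.exp ((y i) ^ 2 / σ ^ 2)) ∂ν
        ≤ ∑ _i : Fin d, (2 : ℝ≥0∞) := by
          apply Finset.sum_le_sum
          intro i _
          have h1 : ‖(EuclideanSpace.single i (1 : ℝ) : EuclideanSpace ℝ (Fin d))‖ = 1 := by
            simp
          have := hν.2 (EuclideanSpace.single i (1 : ℝ)) h1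
          calc ∫⁻ y, ENNReal.ofReal (Real.exp ((y i) ^ 2 / σ ^ 2)) ∂ν
              = ∫⁻ y, ENNReal.ofReal
                (Real.exp (⟪y, EuclideanSpace.single i (1 : ℝ)⟫ ^ 2 / σ ^ 2)) ∂ν := by
                congr 1
                funext y
                rw [EuclideanSpace.inner_single_right]
                norm_num
            _ ≤ 2 := this
      _ = (d : ℝ≥0∞) * 2 := by simp [mul_comm]
  exact lt_of_le_of_lt (le_trans step1 step2) (by finiteness)

lemma expInt {d : ℕ} {σ : ℝ} {ν : Measure (EuclideanSpace ℝ (Fin d))}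
    (hσ : 0 < σ) (hν : IsSubgaussian σ ν) (c : ℝ) :
    Integrable (fun y => Real.exp (c * ‖y‖)) ν := by
  set s : ℝ := ((d : ℝ) + 1) * σ ^ 2 with hs
  have hs0 : 0 < s := by positivity
  refine ((master hσ hν).const_mul (Real.exp (c ^ 2 * s / 4))).mono'
    ((Real.continuous_exp.comp (continuous_const.mul continuous_norm)).aestronglyMeasurable) (Filter.Eventually.of_forall fun y => ?_)
  rw [Real.norm_eq_abs, abs_of_pos (Real.exp_pos _)]
  rw [← Real.exp_add]
  apply Real.exp_le_exp.2
  have h1 : c * ‖y‖ ≤ |c| * ‖y‖ := mul_le_mul_of_nonneg_right (le_abs_self c) (norm_nonneg y)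
  have h2 : |c| * ‖y‖ ≤ c ^ 2 * s / 4 + ‖y‖ ^ 2 / s := by
    rw [div_add_div _ _ (by norm_num) (ne_of_gt hs0), le_div_iff₀ (by positivity)]
    nlinarith [sq_nonneg (2 * ‖y‖ - s * |c|), sq_abs c, abs_nonneg c, norm_nonneg y, sq_nonneg s]
  linarith

set_option maxHeartbeats 1000000
set_option synthInstance.maxHeartbeats 400000

/-- Smoothness of the entropic potential: with `w(x,y) = exp((−½‖x−y‖² + g(y))/ε)`,
the normalizing integral `D(x) = ∫ w(x,y) dν(y)` is finite and positive, the
vector-valued integral `N(x) = ∫ y·w(x,y) dν(y)` is well defined, and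
`f(x) = −ε log D(x)` has gradient `x − N(x)/D(x)` at every point. -/
theorem entropic_potential_gradient
    {d : ℕ} (ε σ : ℝ) (hε : 0 < ε) (hσ : 0 < σ)
    (μ ν : Measure (EuclideanSpace ℝ (Fin d))) (hμ : MemP2 μ) (hν : IsSubgaussian σ ν)
    (g : EuclideanSpace ℝ (Fin d) → ℝ) (hgm : Measurable g)
    (hg : ∀ y, g y ≤ (1 / 2) * ∫ z, ‖z - y‖ ^ 2 ∂μ) :
    (∀ x, Integrable (fun y => Real.exp ((-(1 / 2) * ‖x - y‖ ^ 2 + g y) / ε)) ν) ∧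
    (∀ x, 0 < ∫ y, Real.exp ((-(1 / 2) * ‖x - y‖ ^ 2 + g y) / ε) ∂ν) ∧
    (∀ x, Integrable (fun y => Real.exp ((-(1 / 2) * ‖x - y‖ ^ 2 + g y) / ε) • y) ν) ∧
    (∀ x, HasGradientAt
      (fun x' => -ε * Real.log (∫ y, Real.exp ((-(1 / 2) * ‖x' - y‖ ^ 2 + g y) / ε) ∂ν))
      (x - (∫ y, Real.exp ((-(1 / 2) * ‖x - y‖ ^ 2 + g y) / ε) ∂ν)⁻¹ •
        ∫ y, Real.exp ((-(1 / 2) * ‖x - y‖ ^ 2 + g y) / ε) • y ∂ν) x) := by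
  haveI hνP := hν.1
  haveI hμP := hμ.1
  set w : EuclideanSpace ℝ (Fin d) → EuclideanSpace ℝ (Fin d) → ℝ :=
    fun x y => Real.exp ((-(1 / 2) * ‖x - y‖ ^ 2 + g y) / ε) with hw
  set A : ℝ := ∫ z, ‖z‖ ^ 2 ∂μ with hA
  set B : ℝ := ∫ z, ‖z‖ ∂μ with hB
  have hInt1 : Integrable (fun z : EuclideanSpace ℝ (Fin d) => ‖z‖) μ := by
    have hi : Integrable (fun z : EuclideanSpace ℝ (Fin d) => 1 + ‖z‖ ^ 2) μ :=
      (integrable_const (1 : ℝ)).add hμ.2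
    refine hi.mono' continuous_norm.aestronglyMeasurable
      (Filter.Eventually.of_forall fun z => ?_)
    rw [Real.norm_eq_abs, abs_of_nonneg (norm_nonneg z)]
    nlinarith [sq_nonneg (‖z‖ - 1)]
  have hB0 : 0 ≤ B := integral_nonneg fun z => norm_nonneg z
  have hgbound : ∀ y : EuclideanSpace ℝ (Fin d), g y ≤ A / 2 + B * ‖y‖ + ‖y‖ ^ 2 / 2 := by
    intro y
    have i1 : Integrable (fun z : EuclideanSpace ℝ (Fin d) => ‖z‖ ^ 2 + 2 * ‖y‖ * ‖z‖) μ :=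
      hμ.2.add (hInt1.const_mul _)
    have hint : Integrable (fun z : EuclideanSpace ℝ (Fin d) =>
        (‖z‖ ^ 2 + 2 * ‖y‖ * ‖z‖) + ‖y‖ ^ 2) μ := i1.add (integrable_const _)
    have hle : ∫ z, ‖z - y‖ ^ 2 ∂μ ≤ ∫ z, ((‖z‖ ^ 2 + 2 * ‖y‖ * ‖z‖) + ‖y‖ ^ 2) ∂μ := by
      refine integral_mono_of_nonneg (Filter.Eventually.of_forall fun z => by positivity)
        hint (Filter.Eventually.of_forall fun z => ?_)
      show ‖z - y‖ ^ 2 ≤ (‖z‖ ^ 2 + 2 * ‖y‖ * ‖z‖) + ‖y‖ ^ 2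
      have h1 : ‖z - y‖ ≤ ‖z‖ + ‖y‖ := norm_sub_le z y
      nlinarith [norm_nonneg (z - y), norm_nonneg z, norm_nonneg y]
    have heq : ∫ z, ((‖z‖ ^ 2 + 2 * ‖y‖ * ‖z‖) + ‖y‖ ^ 2) ∂μ
        = (A + 2 * ‖y‖ * B) + ‖y‖ ^ 2 := by
      rw [integral_add i1 (integrable_const _), integral_add hμ.2 (hInt1.const_mul _),
        MeasureTheory.integral_const_mul, integral_const]
      simp [measure_univ]
      rfl
    have h2 := hle.trans_eq heq
    have h3 := hg y
    linarith
  have hwm : ∀ x : EuclideanSpace ℝ (Fin d), Measurable (fun y => w x y) := by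
    intro x
    apply Real.measurable_exp.comp
    apply Measurable.div_const
    exact (((continuous_const.sub continuous_id).norm.pow 2).measurable.const_mul _).add hgm
  have hεne : ε ≠ 0 := ne_of_gt hε
  have hwbound : ∀ x y : EuclideanSpace ℝ (Fin d), w x y ≤
      Real.exp (A / (2 * ε)) * Real.exp ((‖x‖ + B) / ε * ‖y‖) := by
    intro x y
    rw [hw, ← Real.exp_add]
    apply Real.exp_le_exp.2
    have hnum : -(1 / 2) * ‖x - y‖ ^ 2 + g y ≤ A / 2 + (‖x‖ + B) * ‖y‖ := by
      have h1 := hgbound y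
      have h2 : ⟪x, y⟫ ≤ ‖x‖ * ‖y‖ := real_inner_le_norm x y
      have h3 : ‖x - y‖ ^ 2 = ‖x‖ ^ 2 - 2 * ⟪x, y⟫ + ‖y‖ ^ 2 := norm_sub_sq_real x y
      nlinarith [sq_nonneg ‖x‖]
    calc (-(1 / 2) * ‖x - y‖ ^ 2 + g y) / ε ≤ (A / 2 + (‖x‖ + B) * ‖y‖) / ε := by gcongr
      _ = A / (2 * ε) + (‖x‖ + B) / ε * ‖y‖ := by field_simp
  have part1 : ∀ x, Integrable (fun y => Real.exp ((-(1 / 2) * ‖x - y‖ ^ 2 + g y) / ε)) ν := by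
    intro x
    refine ((expInt hσ hν ((‖x‖ + B) / ε)).const_mul (Real.exp (A / (2 * ε)))).mono'
      (hwm x).aestronglyMeasurable (Filter.Eventually.of_forall fun y => ?_)
    rw [Real.norm_eq_abs, abs_of_pos (Real.exp_pos _)]
    exact hwbound x y
  have part2 : ∀ x, 0 < ∫ y, Real.exp ((-(1 / 2) * ‖x - y‖ ^ 2 + g y) / ε) ∂ν :=
    fun x => integral_exp_pos (part1 x)
  have part3 : ∀ x, Integrable
      (fun y => Real.exp ((-(1 / 2) * ‖x - y‖ ^ 2 + g y) / ε) • y) ν := by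
    intro x
    refine ((expInt hσ hν ((‖x‖ + B) / ε + 1)).const_mul (Real.exp (A / (2 * ε)))).mono'
      ((hwm x).aestronglyMeasurable.smul aestronglyMeasurable_id)
      (Filter.Eventually.of_forall fun y => ?_)
    rw [norm_smul, Real.norm_eq_abs, abs_of_pos (Real.exp_pos _)]
    have h1 : ‖y‖ ≤ Real.exp ‖y‖ := by
      have := Real.add_one_le_exp ‖y‖; linarith
    have h2 := hwbound x y
    calc w x y * ‖y‖
        ≤ (Real.exp (A / (2 * ε)) * Real.exp ((‖x‖ + B) / ε * ‖y‖)) * Real.exp ‖y‖ :=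
          mul_le_mul h2 h1 (norm_nonneg y) (by positivity)
      _ = Real.exp (A / (2 * ε)) * Real.exp (((‖x‖ + B) / ε + 1) * ‖y‖) := by
          rw [mul_assoc, ← Real.exp_add]; ring_nf
  refine ⟨part1, part2, part3, ?_⟩
  intro x
  set c₁ : ℝ := (‖x‖ + 1 + B) / ε with hc₁
  set K : ℝ := Real.exp (A / (2 * ε)) * ε⁻¹ * (‖x‖ + 2) with hK
  set F' : EuclideanSpace ℝ (Fin d) → EuclideanSpace ℝ (Fin d) →
      (EuclideanSpace ℝ (Fin d) →L[ℝ] ℝ) :=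
    fun x' y => Real.exp ((-(1 / 2) * ‖x' - y‖ ^ 2 + g y) / ε) •
      ((-ε⁻¹) • innerSL ℝ (x' - y)) with hF'
  have hdiff : ∀ (y x' : EuclideanSpace ℝ (Fin d)),
      HasFDerivAt (fun x'' => w x'' y) (F' x' y) x' := by
    intro y x'
    have hq : HasFDerivAt (fun x'' : EuclideanSpace ℝ (Fin d) => ‖x'' - y‖ ^ 2)
        ((2 : ℕ) • innerSL ℝ (x' - y)) x' := by
      simpa [map_sub] using ((hasFDerivAt_id x').sub_const y).norm_sq
    have he : HasFDerivAt (fun x'' => (-(1 / 2) * ‖x'' - y‖ ^ 2 + g y) / ε)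
        (ε⁻¹ • ((-(1 / 2) : ℝ) • ((2 : ℕ) • innerSL ℝ (x' - y)))) x' := by
      have := ((hq.const_mul (-(1 / 2))).add_const (g y)).mul_const ε⁻¹
      simpa [div_eq_mul_inv, smul_smul, mul_comm] using this
    have hCLM : Real.exp ((-(1 / 2) * ‖x' - y‖ ^ 2 + g y) / ε) •
        (ε⁻¹ • ((-(1 / 2) : ℝ) • ((2 : ℕ) • innerSL ℝ (x' - y)))) = F' x' y := by
      ext u
      simp only [hF', ContinuousLinearMap.smul_apply, innerSL_apply_apply, smul_eq_mul,
        nsmul_eq_mul, Nat.cast_ofNat, neg_smul, ContinuousLinearMap.neg_apply]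
      ring
    exact hCLM ▸ he.exp
  have hF'norm : ∀ (x' y : EuclideanSpace ℝ (Fin d)),
      ‖F' x' y‖ = w x' y * (ε⁻¹ * ‖x' - y‖) := by
    intro x' y
    show ‖Real.exp ((-(1 / 2) * ‖x' - y‖ ^ 2 + g y) / ε) • ((-ε⁻¹) • innerSL ℝ (x' - y))‖
      = w x' y * (ε⁻¹ * ‖x' - y‖)
    rw [hw]
    rw [norm_smul (β := EuclideanSpace ℝ (Fin d) →L[ℝ] ℝ),
      norm_smul (β := EuclideanSpace ℝ (Fin d) →L[ℝ] ℝ), innerSL_apply_norm,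
      Real.norm_eq_abs, Real.abs_exp, Real.norm_eq_abs, abs_neg, abs_inv, abs_of_pos hε]
  have hF'bound : ∀ (y : EuclideanSpace ℝ (Fin d)), ∀ x' ∈ Metric.ball x 1,
      ‖F' x' y‖ ≤ K * Real.exp ((c₁ + 1) * ‖y‖) := by
    intro y x' hx'
    have hx'n : ‖x'‖ ≤ ‖x‖ + 1 := by
      have := Metric.mem_ball.1 hx'
      rw [dist_eq_norm] at this
      calc ‖x'‖ = ‖x' - x + x‖ := by rw [sub_add_cancel]
        _ ≤ ‖x' - x‖ + ‖x‖ := norm_add_le _ _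
        _ ≤ ‖x‖ + 1 := by linarith
    have h2 : w x' y ≤ Real.exp (A / (2 * ε)) * Real.exp (c₁ * ‖y‖) := by
      refine (hwbound x' y).trans ?_
      apply mul_le_mul_of_nonneg_left _ (Real.exp_pos _).le
      apply Real.exp_le_exp.2
      apply mul_le_mul_of_nonneg_right _ (norm_nonneg y)
      rw [hc₁]
      gcongr <;> linarith
    have h3 : ‖x' - y‖ ≤ (‖x‖ + 2) * Real.exp ‖y‖ := by
      have h4 : ‖x' - y‖ ≤ ‖x'‖ + ‖y‖ := norm_sub_le _ _
      have h5 := Real.add_one_le_exp ‖y‖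
      nlinarith [norm_nonneg x, norm_nonneg y, norm_nonneg x']
    rw [hF'norm x' y]
    calc w x' y * (ε⁻¹ * ‖x' - y‖)
        ≤ (Real.exp (A / (2 * ε)) * Real.exp (c₁ * ‖y‖)) *
            (ε⁻¹ * ((‖x‖ + 2) * Real.exp ‖y‖)) := by
          apply mul_le_mul h2 _ (by positivity) (by positivity)
          exact mul_le_mul_of_nonneg_left h3 (by positivity)
      _ = K * Real.exp ((c₁ + 1) * ‖y‖) := by
          rw [hK, show (c₁ + 1) * ‖y‖ = c₁ * ‖y‖ + ‖y‖ by ring, Real.exp_add]; ring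
  have hF'meas : AEStronglyMeasurable (fun y => F' x y) ν := by
    apply AEStronglyMeasurable.smul (hwm x).aestronglyMeasurable
    apply Continuous.aestronglyMeasurable
    exact Continuous.const_smul (g := fun y => innerSL ℝ (x - y))
      ((innerSL ℝ).continuous.comp (continuous_const.sub continuous_id)) (-ε⁻¹ : ℝ)
  have hbint : Integrable (fun y => K * Real.exp ((c₁ + 1) * ‖y‖)) ν :=
    (expInt hσ hν (c₁ + 1)).const_mul K
  have HD : HasFDerivAt (fun x' => ∫ y, w x' y ∂ν) (∫ y, F' x y ∂ν) x := by
    exact hasFDerivAt_integral_of_dominated_of_fderiv_le (Metric.ball_mem_nhds x one_pos)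
      (Filter.Eventually.of_forall fun x' => (hwm x').aestronglyMeasurable) (part1 x) hF'meas
      (Filter.Eventually.of_forall fun y x' hx' => hF'bound y x' hx') hbint
      (Filter.Eventually.of_forall fun y x' _ => hdiff y x')
  have hF'int : Integrable (fun y => F' x y) ν :=
    hbint.mono' hF'meas
      (Filter.Eventually.of_forall fun y => by
        exact hF'bound y x (Metric.mem_ball_self one_pos))
  set D : ℝ := ∫ y, w x y ∂ν with hD
  set N : EuclideanSpace ℝ (Fin d) := ∫ y, w x y • y ∂ν with hN
  have hDpos : 0 < D := part2 x
  have hDne : D ≠ 0 := ne_of_gt hDpos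
  have hlog : HasFDerivAt (fun x' => -ε * Real.log (∫ y, w x' y ∂ν))
      ((-ε) • (D⁻¹ • ∫ y, F' x y ∂ν)) x := (HD.log hDne).const_mul (-ε)
  rw [hasGradientAt_iff_hasFDerivAt]
  have key : (InnerProductSpace.toDual ℝ (EuclideanSpace ℝ (Fin d))) (x - D⁻¹ • N)
      = (-ε) • (D⁻¹ • ∫ y, F' x y ∂ν) := by
    apply ContinuousLinearMap.ext
    intro u
    have happ : (∫ y, F' x y ∂ν) u = ∫ y, (F' x y) u ∂ν :=
      ContinuousLinearMap.integral_apply hF'int u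
    have h1 : ∀ y, (F' x y) u = -ε⁻¹ * (w x y * ⟪x, u⟫ - ⟪u, w x y • y⟫) := by
      intro y
      simp only [hF', ContinuousLinearMap.smul_apply, smul_eq_mul, innerSL_apply_apply,
        inner_sub_left, real_inner_smul_right]
      rw [real_inner_comm u y]
      ring
    have hI1 : Integrable (fun y => w x y * ⟪x, u⟫) ν := (part1 x).mul_const _
    have hI2 : Integrable (fun y => ⟪u, w x y • y⟫) ν := (part3 x).const_inner u
    have h2 : ∫ y, (F' x y) u ∂ν = -ε⁻¹ * (D * ⟪x, u⟫ - ⟪u, N⟫) := by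
      simp_rw [h1]
      rw [MeasureTheory.integral_const_mul, integral_sub hI1 hI2,
        MeasureTheory.integral_mul_const, integral_inner (part3 x) u]
    rw [InnerProductSpace.toDual_apply_apply, ContinuousLinearMap.smul_apply,
      ContinuousLinearMap.smul_apply, happ, h2, inner_sub_left, real_inner_smul_left,
      smul_eq_mul, smul_eq_mul, real_inner_comm u N]
    field_simp
  rw [key]
  exact hlog
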